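/- Let A = (a_{i₁⋯i_d}) be a symmetric d-tensor of dimension n over k, let f = Σ_{i₁,…,i_d} a_{i₁⋯i_d} x_{i₁}⋯x_{i_d} be the associated homogeneous polynomial of degree d, and let H = (∂²f/∂xᵢ∂xⱼ) be its Hessian matrix (an n×n matrix with polynomial entries). Then an n×n matrix X over k satisfies Xᵀ A^{(i₃⋯i_d)} = A^{(i₃⋯i_d)} X for all i₃,…,i_d if and only if the matrix of polynomials H·X is symmetric, i.e. (HX)ᵀ = HX. -/

import Mathlib

open Matrix MvPolynomial Finset

section Aux

variable {k : Type*} [Field k] {n e : ℕ}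

/-- exponent multiset of a tuple -/
noncomputable def mu {m : ℕ} (c : Fin m → Fin n) : Fin n →₀ ℕ := ∑ t, Finsupp.single (c t) 1

lemma mu_comp {m : ℕ} (c : Fin m → Fin n) (σ : Equiv.Perm (Fin m)) : mu (c ∘ σ) = mu c :=
  Equiv.sum_comp σ (fun t => Finsupp.single (c t) 1)

lemma prod_X_tuple {m : ℕ} (c : Fin m → Fin n) :
    (∏ t, (X (c t) : MvPolynomial (Fin n) k)) = monomial (mu c) 1 := by
  classical
  unfold mu
  induction' (univ : Finset (Fin m)) using Finset.induction with a s ha ih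
  · simp
  · rw [Finset.prod_insert ha, Finset.sum_insert ha, ih, X, monomial_mul, one_mul]

lemma mu_toMultiset {m : ℕ} (c : Fin m → Fin n) :
    Finsupp.toMultiset (mu c) = (List.ofFn c : Multiset (Fin n)) := by
  unfold mu
  rw [map_sum]
  simp only [Finsupp.toMultiset_single, one_smul]
  rw [← Fin.univ_val_map, Finset.sum_eq_multiset_sum]
  rw [show (fun x => ({c x} : Multiset (Fin n))) = (fun a => ({a} : Multiset (Fin n))) ∘ c from
    rfl, ← Multiset.map_map]
  exact Multiset.sum_map_singleton _

lemma exists_perm_of_mu_eq {m : ℕ} {c c₀ : Fin m → Fin n} (h : mu c = mu c₀) :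
    ∃ σ : Equiv.Perm (Fin m), c = c₀ ∘ σ := by
  have hp : (List.ofFn c).Perm (List.ofFn c₀) := by
    rw [← Multiset.coe_eq_coe, ← mu_toMultiset, ← mu_toMultiset, h]
  have h1 : List.ofFn (c ∘ Tuple.sort c) = List.ofFn (c₀ ∘ Tuple.sort c₀) := by
    refine List.Perm.eq_of_sortedLE (Tuple.monotone_sort c).sortedLE_ofFn
      (Tuple.monotone_sort c₀).sortedLE_ofFn ?_
    exact ((Tuple.sort c).ofFn_comp_perm c).trans
      (hp.trans ((Tuple.sort c₀).ofFn_comp_perm c₀).symm)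
  have h2 := List.ofFn_injective h1
  exact ⟨(Tuple.sort c₀) * (Tuple.sort c)⁻¹, by
    funext t
    have := congrFun h2 ((Tuple.sort c)⁻¹ t)
    simpa using this⟩

open scoped Classical in
lemma class_card_dvd {m : ℕ} (c₀ : Fin m → Fin n) :
    ((univ : Finset (Fin m → Fin n)).filter (fun c => mu c = mu c₀)).card ∣ m.factorial := by
  classical
  letI act : MulAction (Equiv.Perm (Fin m)) (Fin m → Fin n) := arrowAction
  haveI : Fintype (MulAction.orbit (Equiv.Perm (Fin m)) c₀) :=
    (Set.toFinite _).fintype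
  have hset : (univ : Finset (Fin m → Fin n)).filter (fun c => mu c = mu c₀)
      = (MulAction.orbit (Equiv.Perm (Fin m)) c₀).toFinset := by
    ext c
    simp only [Finset.mem_filter, Finset.mem_univ, true_and, Set.mem_toFinset]
    constructor
    · intro h
      obtain ⟨σ, hσ⟩ := exists_perm_of_mu_eq h
      refine ⟨σ⁻¹, ?_⟩
      show c₀ ∘ ⇑(σ⁻¹)⁻¹ = c
      rw [inv_inv, hσ]
    · rintro ⟨σ, rfl⟩
      show mu (c₀ ∘ ⇑σ⁻¹) = mu c₀
      exact mu_comp c₀ σ⁻¹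
  rw [hset, Set.toFinset_card]
  have h := MulAction.card_orbit_mul_card_stabilizer_eq_card_group (G := Equiv.Perm (Fin m)) c₀
  rw [Fintype.card_perm, Fintype.card_fin] at h
  exact ⟨_, h.symm⟩

/-- extend a permutation of `Fin e` to `Fin (e+2)` fixing `0` and `1`. -/
def shift2 {e : ℕ} (σ : Equiv.Perm (Fin e)) : Equiv.Perm (Fin (e + 2)) where
  toFun := fun u => Fin.cases 0 (fun u' => Fin.cases 1 (fun t => (σ t).succ.succ) u') u
  invFun := fun u => Fin.cases 0 (fun u' => Fin.cases 1 (fun t => (σ.symm t).succ.succ) u') u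
  left_inv := by
    intro u
    refine Fin.cases ?_ (fun u' => ?_) u
    · simp
    · refine Fin.cases ?_ (fun t => ?_) u'
      · beta_reduce
        rw [Fin.cases_succ, Fin.cases_zero, ← Fin.succ_zero_eq_one, Fin.cases_succ,
          Fin.cases_zero]
      · simp
  right_inv := by
    intro u
    refine Fin.cases ?_ (fun u' => ?_) u
    · simp
    · refine Fin.cases ?_ (fun t => ?_) u'
      · beta_reduce
        rw [Fin.cases_succ, Fin.cases_zero, ← Fin.succ_zero_eq_one, Fin.cases_succ,
          Fin.cases_zero]
      · simp

lemma cons_comp_shift2 {e : ℕ} {α : Type*} (x y : α) (c : Fin e → α) (σ : Equiv.Perm (Fin e)) :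
    (Fin.cons x (Fin.cons y c)) ∘ (shift2 σ) = Fin.cons x (Fin.cons y (c ∘ σ)) := by
  funext u
  refine Fin.cases ?_ (fun u' => ?_) u
  · simp [shift2]
  · refine Fin.cases ?_ (fun t => ?_) u'
    · simp only [shift2, Equiv.coe_fn_mk, Function.comp_apply]
      rw [Fin.cases_succ, Fin.cases_zero, ← Fin.succ_zero_eq_one, Fin.cons_succ, Fin.cons_zero,
        Fin.cons_succ, Fin.cons_zero]
    · simp [shift2]

/-- swap of first two coords -/
lemma cons_comp_swap01 {e : ℕ} {α : Type*} (x y : α) (c : Fin e → α) :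
    (Fin.cons x (Fin.cons y c)) ∘ (Equiv.swap (0 : Fin (e+2)) 1) = Fin.cons y (Fin.cons x c) := by
  funext u
  refine Fin.cases ?_ (fun u' => ?_) u
  · simp
  · refine Fin.cases ?_ (fun t => ?_) u'
    · simp
    · have h1 : Equiv.swap (0 : Fin (e+2)) 1 t.succ.succ = t.succ.succ := by
        refine Equiv.swap_apply_of_ne_of_ne ?_ ?_
        · exact (Fin.succ_ne_zero _)
        · simp [Fin.ext_iff]
      simp [h1]

lemma exists_perm_pair {m : ℕ} (s t : Fin (m + 2)) (hst : s ≠ t) :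
    ∃ σ : Equiv.Perm (Fin (m + 2)), σ 0 = s ∧ σ 1 = t := by
  refine ⟨(Equiv.swap 1 (Equiv.swap 0 s t)).trans (Equiv.swap 0 s), ?_, ?_⟩
  · have h0 : Equiv.swap (1 : Fin (m+2)) (Equiv.swap 0 s t) 0 = 0 := by
      refine Equiv.swap_apply_of_ne_of_ne (by simp [Fin.ext_iff]) ?_
      intro h
      have := congrArg (Equiv.swap (0 : Fin (m+2)) s) h.symm
      exact hst ((by simpa using this : t = s)).symm
    simp [h0]
  · have h1 : Equiv.swap (1 : Fin (m+2)) (Equiv.swap 0 s t) 1 = Equiv.swap 0 s t :=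
      Equiv.swap_apply_left _ _
    simp [h1]

lemma tail_mem {m : ℕ} (u : Fin (m + 2)) (h0 : u ≠ 0) (h1 : u ≠ 1) :
    ∃ w : Fin m, w.succ.succ = u := by
  rcases Fin.eq_zero_or_eq_succ u with rfl | ⟨u', rfl⟩
  · exact absurd rfl h0
  · rcases Fin.eq_zero_or_eq_succ u' with rfl | ⟨w, rfl⟩
    · exact absurd Fin.succ_zero_eq_one h1
    · exact ⟨w, rfl⟩

lemma tail_finset {m : ℕ} :
    ((univ : Finset (Fin (m+2))).erase 1).erase 0
      = Finset.image (fun w : Fin m => w.succ.succ) univ := by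
  ext u
  simp only [mem_erase, mem_univ, and_true, Finset.mem_image]
  constructor
  · rintro ⟨h0, h1⟩
    obtain ⟨w, hw⟩ := tail_mem u h0 h1
    exact ⟨w, trivial, hw⟩
  · rintro ⟨w, -, rfl⟩
    refine ⟨Fin.succ_ne_zero _, fun h => ?_⟩
    rw [← Fin.succ_zero_eq_one] at h
    exact Fin.succ_ne_zero _ (Fin.succ_injective _ h)

lemma tail_prod {m : ℕ} (x y : Fin n) (c : Fin m → Fin n) :
    (∏ u ∈ ((univ : Finset (Fin (m+2))).erase 1).erase 0,
        (X ((Fin.cons x (Fin.cons y c) : Fin (m+2) → Fin n) u) : MvPolynomial (Fin n) k))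
      = ∏ w, X (c w) := by
  rw [tail_finset, Finset.prod_image (fun a _ b _ h =>
    Fin.succ_injective _ (Fin.succ_injective _ h))]
  simp [Fin.cons_succ]

lemma pderiv_finset_prod {ι : Type*} [DecidableEq ι] (j : Fin n) (s : Finset ι)
    (g : ι → MvPolynomial (Fin n) k) :
    pderiv j (∏ t ∈ s, g t) = ∑ t ∈ s, pderiv j (g t) * ∏ t' ∈ s.erase t, g t' := by
  induction' s using Finset.induction with a s ha ih
  · simp
  · rw [Finset.prod_insert ha, pderiv_mul, ih, Finset.sum_insert ha, Finset.erase_insert ha]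
    congr 1
    rw [Finset.mul_sum]
    refine Finset.sum_congr rfl fun t ht => ?_
    rw [Finset.erase_insert_of_ne (by rintro rfl; exact ha ht),
      Finset.prod_insert (by simp [ha])]
    ring

lemma pderiv_X_ite (i a : Fin n) :
    pderiv i (X a : MvPolynomial (Fin n) k) = if a = i then 1 else 0 := by
  rw [pderiv_X, Pi.single_apply]

lemma pderiv2_prod (i j : Fin n) (idx : Fin (e + 2) → Fin n) :
    pderiv i (pderiv j (∏ t, (X (idx t) : MvPolynomial (Fin n) k)))
      = ∑ t, ∑ s, if s ≠ t ∧ idx t = j ∧ idx s = i then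
          ∏ u ∈ ((univ : Finset (Fin (e+2))).erase t).erase s, X (idx u) else 0 := by
  rw [pderiv_finset_prod, map_sum]
  refine Finset.sum_congr rfl fun t _ => ?_
  rw [pderiv_X_ite]
  by_cases hj : idx t = j
  · rw [if_pos hj, one_mul, pderiv_finset_prod]
    rw [← Finset.sum_subset (Finset.subset_univ ((univ : Finset (Fin (e+2))).erase t))
      (fun s _ hs => by
        have hst : s = t := by simpa using hs
        subst hst; simp)]
    refine Finset.sum_congr rfl fun s hs => ?_
    rw [pderiv_X_ite]
    have hst : s ≠ t := (Finset.mem_erase.mp hs).1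
    by_cases hi : idx s = i
    · rw [if_pos hi, one_mul, if_pos ⟨hst, hj, hi⟩]
    · rw [if_neg hi, zero_mul, if_neg (by tauto)]
  · rw [if_neg hj, zero_mul, map_zero, eq_comm, Finset.sum_eq_zero]
    intro s _
    simp [hj]

lemma slice_sum (A : (Fin (e+2) → Fin n) → k)
    (hA : ∀ (σ : Equiv.Perm (Fin (e + 2))) (idx : Fin (e + 2) → Fin n), A (idx ∘ σ) = A idx)
    (i j : Fin n) (s t : Fin (e+2)) (hst : s ≠ t) :
    ∑ idx : Fin (e+2) → Fin n, (if idx t = j ∧ idx s = i then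
        C (A idx) * ∏ u ∈ ((univ : Finset (Fin (e+2))).erase t).erase s,
          (X (idx u) : MvPolynomial (Fin n) k) else 0)
      = ∑ c : Fin e → Fin n, C (A (Fin.cons i (Fin.cons j c))) * ∏ w, X (c w) := by
  classical
  obtain ⟨σ, hσ0, hσ1⟩ := exists_perm_pair s t hst
  rw [← Finset.sum_filter]
  have key : ∀ idx ∈ (univ : Finset (Fin (e+2) → Fin n)).filter
      (fun idx => idx t = j ∧ idx s = i),
      ((Fin.cons i (Fin.cons j (fun w : Fin e => idx (σ w.succ.succ))) : Fin (e+2) → Fin n)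
        ∘ ⇑σ.symm) = idx := by
    intro idx hidx
    obtain ⟨h1, h2⟩ := (Finset.mem_filter.mp hidx).2
    funext u
    rcases Fin.eq_zero_or_eq_succ (σ.symm u) with hv | ⟨v', hv⟩
    · have hu : u = σ 0 := by rw [← hv, Equiv.apply_symm_apply]
      simp only [Function.comp_apply, hv, Fin.cons_zero]
      rw [hu, hσ0]; exact h2.symm
    · rcases Fin.eq_zero_or_eq_succ v' with hv' | ⟨w, hv'⟩
      · subst hv'
        have hu : u = σ 1 := by
          rw [← Fin.succ_zero_eq_one, ← hv, Equiv.apply_symm_apply]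
        simp only [Function.comp_apply, hv, Fin.cons_succ, Fin.cons_zero]
        rw [hu, hσ1]; exact h1.symm
      · subst hv'
        have hu : σ w.succ.succ = u := by rw [← hv, Equiv.apply_symm_apply]
        simp only [Function.comp_apply, hv, Fin.cons_succ]
        rw [hu]
  refine Finset.sum_nbij' (fun idx => fun w : Fin e => idx (σ w.succ.succ))
    (fun c => (Fin.cons i (Fin.cons j c) : Fin (e+2) → Fin n) ∘ ⇑σ.symm)
    (fun _ _ => Finset.mem_univ _) ?_ key (fun c _ => ?_) ?_
  · intro c _
    refine Finset.mem_filter.mpr ⟨Finset.mem_univ _, ?_, ?_⟩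
    · have : σ.symm t = 1 := by rw [← hσ1, Equiv.symm_apply_apply]
      simp only [Function.comp_apply, this]
      rw [← Fin.succ_zero_eq_one, Fin.cons_succ, Fin.cons_zero]
    · have : σ.symm s = 0 := by rw [← hσ0, Equiv.symm_apply_apply]
      simp only [Function.comp_apply, this, Fin.cons_zero]
  · funext w
    simp only [Function.comp_apply, Equiv.symm_apply_apply, Fin.cons_succ]
  · intro idx hidx
    have hrw := key idx hidx
    conv_lhs => rw [← hrw]
    rw [hA σ.symm]
    congr 1
    rw [← tail_prod i j (fun w : Fin e => idx (σ w.succ.succ))]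
    refine Finset.prod_nbij' (fun u => σ.symm u) (fun w => σ w) ?_ ?_ ?_ ?_ ?_
    · intro u hu
      have hus := (Finset.mem_erase.mp hu).1
      have hut := (Finset.mem_erase.mp (Finset.mem_erase.mp hu).2).1
      refine Finset.mem_erase.mpr ⟨?_, Finset.mem_erase.mpr ⟨?_, Finset.mem_univ _⟩⟩
      · intro h; exact hus (by rw [← hσ0, ← h, Equiv.apply_symm_apply])
      · intro h; exact hut (by rw [← hσ1, ← h, Equiv.apply_symm_apply])
    · intro w hw
      have hw0 := (Finset.mem_erase.mp hw).1
      have hw1 := (Finset.mem_erase.mp (Finset.mem_erase.mp hw).2).1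
      refine Finset.mem_erase.mpr ⟨?_, Finset.mem_erase.mpr ⟨?_, Finset.mem_univ _⟩⟩
      · intro h; exact hw0 (σ.injective (by rw [hσ0]; exact h))
      · intro h; exact hw1 (σ.injective (by rw [hσ1]; exact h))
    · intro u _; exact Equiv.apply_symm_apply σ u
    · intro w _; exact Equiv.symm_apply_apply σ w
    · intro u _; rfl

lemma hess (A : (Fin (e+2) → Fin n) → k)
    (hA : ∀ (σ : Equiv.Perm (Fin (e + 2))) (idx : Fin (e + 2) → Fin n), A (idx ∘ σ) = A idx)
    (i j : Fin n) :
    pderiv i (pderiv j (∑ idx : Fin (e + 2) → Fin n, C (A idx) * ∏ t, X (idx t)))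
      = ((e+2) * (e+1)) •
        ∑ c : Fin e → Fin n,
          C (A (Fin.cons i (Fin.cons j c))) * ∏ w, (X (c w) : MvPolynomial (Fin n) k) := by
  classical
  have h1 : pderiv i (pderiv j (∑ idx : Fin (e + 2) → Fin n, C (A idx) * ∏ t, X (idx t)))
      = ∑ idx : Fin (e + 2) → Fin n, C (A idx)
          * pderiv i (pderiv j (∏ t, (X (idx t) : MvPolynomial (Fin n) k))) := by
    rw [map_sum, map_sum]
    exact Finset.sum_congr rfl fun idx _ => by rw [pderiv_C_mul, pderiv_C_mul]
  rw [h1]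
  simp_rw [pderiv2_prod i j, Finset.mul_sum, mul_ite, mul_zero]
  rw [Finset.sum_comm]
  have h2 : ∀ t : Fin (e+2), (∑ idx : Fin (e + 2) → Fin n, ∑ s : Fin (e+2),
        if s ≠ t ∧ idx t = j ∧ idx s = i then
          C (A idx) * ∏ u ∈ ((univ : Finset (Fin (e+2))).erase t).erase s,
            (X (idx u) : MvPolynomial (Fin n) k) else 0)
      = ∑ s : Fin (e+2), if s ≠ t then
          ∑ c : Fin e → Fin n, C (A (Fin.cons i (Fin.cons j c))) * ∏ w, X (c w) else 0 := by
    intro t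
    rw [Finset.sum_comm]
    refine Finset.sum_congr rfl fun s _ => ?_
    by_cases hst : s = t
    · subst hst
      simp
    · rw [if_pos hst, ← slice_sum A hA i j s t hst]
      refine Finset.sum_congr rfl fun idx _ => ?_
      simp [hst]
  simp_rw [h2]
  set V := ∑ c : Fin e → Fin n,
      C (A (Fin.cons i (Fin.cons j c))) * ∏ w, (X (c w) : MvPolynomial (Fin n) k) with hV
  have h3 : ∀ t : Fin (e+2), (∑ s : Fin (e+2), if s ≠ t then V else 0) = (e+1) • V := by
    intro t
    rw [Finset.sum_ite, Finset.sum_const, Finset.sum_const_zero, add_zero, Finset.filter_ne',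
      Finset.card_erase_of_mem (Finset.mem_univ _), Finset.card_univ, Fintype.card_fin]
    congr 1
  simp_rw [h3]
  rw [Finset.sum_const, Finset.card_univ, Fintype.card_fin, smul_smul]

lemma NX_entry (B : Fin n → (Fin e → Fin n) → k) (x : Fin n → k) :
    ∑ l, (∑ c : Fin e → Fin n, C (B l c) * ∏ w, (X (c w) : MvPolynomial (Fin n) k)) * C (x l)
      = ∑ c : Fin e → Fin n, C (∑ l, B l c * x l) * ∏ w, X (c w) := by
  simp_rw [Finset.sum_mul]
  rw [Finset.sum_comm]
  refine Finset.sum_congr rfl fun c _ => ?_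
  rw [map_sum, Finset.sum_mul]
  exact Finset.sum_congr rfl fun l _ => by rw [C_mul]; ring

lemma cast_ne_zero_of_primes {e : ℕ}
    (hchar : CharZero k ∨ ∃ p : ℕ, CharP k p ∧ e + 2 < p)
    {M : ℕ} (hM : M ≠ 0) (hdvd : ∀ q : ℕ, q.Prime → q ∣ M → q ≤ e + 2) :
    (M : k) ≠ 0 := by
  rcases hchar with h | ⟨p, hp, hpe⟩
  · exact Nat.cast_ne_zero.mpr hM
  · intro h0
    have hpd : p ∣ M := (CharP.cast_eq_zero_iff k p M).mp h0
    rcases CharP.char_is_prime_or_zero k p with hpr | rfl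
    · exact absurd (hdvd p hpr hpd) (by omega)
    · exact hM (zero_dvd_iff.mp hpd)

end Aux

/-- Let `A` be a symmetric `d`-tensor (here `d = e + 2 ≥ 3`) of dimension `n`
over `k`, `f = Σ a_{i₁⋯i_d} x_{i₁}⋯x_{i_d}` the associated form and
`H = (∂²f/∂xᵢ∂xⱼ)` its Hessian matrix (with polynomial entries). Then an `n×n` matrix `X`
over `k` satisfies `Xᵀ A^{(i₃⋯i_d)} = A^{(i₃⋯i_d)} X` for all slices iff the polynomial matrix
`H·X` is symmetric, i.e. `(HX)ᵀ = HX`. -/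
theorem stmt_2 {k : Type*} [Field k] {n e : ℕ} (he : 1 ≤ e)
    (hchar : CharZero k ∨ ∃ p : ℕ, CharP k p ∧ e + 2 < p)
    (A : (Fin (e + 2) → Fin n) → k)
    (hA : ∀ (σ : Equiv.Perm (Fin (e + 2))) (idx : Fin (e + 2) → Fin n), A (idx ∘ σ) = A idx)
    (X : Matrix (Fin n) (Fin n) k) :
    let f : MvPolynomial (Fin n) k :=
      ∑ idx : Fin (e + 2) → Fin n, C (A idx) * ∏ t, MvPolynomial.X (idx t)
    let H : Matrix (Fin n) (Fin n) (MvPolynomial (Fin n) k) :=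
      Matrix.of fun i j => pderiv i (pderiv j f)
    (∀ c : Fin e → Fin n,
        Xᵀ * Matrix.of (fun i j => A (Fin.cons i (Fin.cons j c)))
          = Matrix.of (fun i j => A (Fin.cons i (Fin.cons j c))) * X)
      ↔ (H * X.map C)ᵀ = H * X.map C := by
  classical
  intro f H
  set M : ℕ := (e + 2) * (e + 1) with hM
  set Sc : (Fin e → Fin n) → Matrix (Fin n) (Fin n) k :=
    fun c => Matrix.of (fun i j => A (Fin.cons i (Fin.cons j c))) with hSc
  -- symmetry of slices under permutations of the tail and of the two head coordinates
  have hScperm : ∀ (c : Fin e → Fin n) (σ : Equiv.Perm (Fin e)), Sc (c ∘ σ) = Sc c := by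
    intro c σ
    ext i j
    show A (Fin.cons i (Fin.cons j (c ∘ σ))) = A (Fin.cons i (Fin.cons j c))
    rw [← cons_comp_shift2, hA]
  have hScsymm : ∀ (c : Fin e → Fin n) (i j : Fin n),
      A (Fin.cons i (Fin.cons j c)) = A (Fin.cons j (Fin.cons i c)) := by
    intro c i j
    rw [← cons_comp_swap01 j i c, hA]
  -- the entries of H * X.map C
  have hEntry : ∀ i j : Fin n,
      (H * X.map C : Matrix (Fin n) (Fin n) (MvPolynomial (Fin n) k)) i j
      = M • ∑ c : Fin e → Fin n,
          C ((Sc c * X) i j) * ∏ w, (MvPolynomial.X (c w) : MvPolynomial (Fin n) k) := by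
    intro i j
    rw [Matrix.mul_apply]
    have hH : ∀ l, H i l = M • ∑ c : Fin e → Fin n,
        C (A (Fin.cons i (Fin.cons l c))) * ∏ w, (MvPolynomial.X (c w) :
          MvPolynomial (Fin n) k) := fun l => hess A hA i l
    calc ∑ l, H i l * X.map C l j
        = M • ∑ l, (∑ c : Fin e → Fin n, C (A (Fin.cons i (Fin.cons l c)))
            * ∏ w, (MvPolynomial.X (c w) : MvPolynomial (Fin n) k)) * C (X l j) := by
          rw [Finset.smul_sum]
          refine Finset.sum_congr rfl fun l _ => ?_
          rw [hH l, Matrix.map_apply, smul_mul_assoc]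
      _ = M • ∑ c : Fin e → Fin n,
            C ((Sc c * X) i j) * ∏ w, (MvPolynomial.X (c w) : MvPolynomial (Fin n) k) := by
          rw [NX_entry]
          congr 1
  -- the transposed entries
  have hEntryT : ∀ i j : Fin n,
      (H * X.map C : Matrix (Fin n) (Fin n) (MvPolynomial (Fin n) k)) j i
      = M • ∑ c : Fin e → Fin n,
          C ((Xᵀ * Sc c) i j) * ∏ w, (MvPolynomial.X (c w) : MvPolynomial (Fin n) k) := by
    intro i j
    rw [hEntry j i]
    congr 1
    refine Finset.sum_congr rfl fun c _ => ?_
    congr 2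
    rw [Matrix.mul_apply, Matrix.mul_apply]
    refine Finset.sum_congr rfl fun l _ => ?_
    rw [Matrix.transpose_apply]
    show A (Fin.cons j (Fin.cons l c)) * X l i = X l i * A (Fin.cons l (Fin.cons j c))
    rw [hScsymm c j l, mul_comm]
  constructor
  · -- slices commute → HX symmetric
    intro hs
    refine Matrix.ext fun i j => ?_
    rw [Matrix.transpose_apply, hEntryT i j, hEntry i j]
    refine congrArg (fun q : MvPolynomial (Fin n) k => M • q) (Finset.sum_congr rfl fun c _ => ?_)
    simp only [hSc]
    rw [hs c]
  · -- HX symmetric → slices commute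
    intro hsym c₀
    ext i j
    have h : ((H * X.map C)ᵀ : Matrix (Fin n) (Fin n) (MvPolynomial (Fin n) k)) i j
        = (H * X.map C : Matrix (Fin n) (Fin n) (MvPolynomial (Fin n) k)) i j := by
      rw [hsym]
    rw [Matrix.transpose_apply, hEntryT i j, hEntry i j] at h
    -- extract the coefficient of the monomial `mu c₀`
    have hco := congrArg (coeff (mu c₀)) h
    have hexp : ∀ (a : (Fin e → Fin n) → k),
        coeff (mu c₀) (M • ∑ c : Fin e → Fin n,
          C (a c) * ∏ w, (MvPolynomial.X (c w) : MvPolynomial (Fin n) k))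
        = (M : k) * ∑ c ∈ (univ : Finset (Fin e → Fin n)).filter (fun c => mu c = mu c₀),
            a c := by
      intro a
      rw [coeff_smul, Finset.sum_filter]
      rw [show (coeff (mu c₀) (∑ c : Fin e → Fin n,
          C (a c) * ∏ w, (MvPolynomial.X (c w) : MvPolynomial (Fin n) k)))
        = ∑ c : Fin e → Fin n, if mu c = mu c₀ then a c else 0 from ?_]
      · rw [nsmul_eq_mul]
      · rw [coeff_sum]
        refine Finset.sum_congr rfl fun c _ => ?_
        rw [prod_X_tuple, C_mul_monomial, mul_one, coeff_monomial]
    rw [hexp (fun c => (Xᵀ * Sc c) i j), hexp (fun c => (Sc c * X) i j)] at hco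
    -- the summands are constant on the class of `c₀`
    have hconst : ∀ (P : Matrix (Fin n) (Fin n) k → k),
        (∑ c ∈ (univ : Finset (Fin e → Fin n)).filter (fun c => mu c = mu c₀), P (Sc c))
          = (((univ : Finset (Fin e → Fin n)).filter
              (fun c => mu c = mu c₀)).card : k) * P (Sc c₀) := by
      intro P
      have hcc : ∀ c ∈ (univ : Finset (Fin e → Fin n)).filter (fun c => mu c = mu c₀),
          P (Sc c) = P (Sc c₀) := by
        intro c hc
        obtain ⟨σ, rfl⟩ := exists_perm_of_mu_eq (Finset.mem_filter.mp hc).2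
        rw [hScperm]
      rw [Finset.sum_congr rfl hcc, Finset.sum_const, nsmul_eq_mul]
    have hcard_ne : ((((univ : Finset (Fin e → Fin n)).filter
        (fun c => mu c = mu c₀)).card : k)) ≠ 0 := by
      refine cast_ne_zero_of_primes hchar ?_ ?_
      · refine Finset.card_ne_zero_of_mem (Finset.mem_filter.mpr ⟨Finset.mem_univ c₀, rfl⟩)
      · intro q hq hqd
        have h1 : q ∣ e.factorial := hqd.trans (class_card_dvd c₀)
        have h2 : q ≤ e := (Nat.Prime.dvd_factorial hq).mp h1
        omega
    have hM_ne : ((M : k)) ≠ 0 := by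
      refine cast_ne_zero_of_primes hchar (by positivity) ?_
      intro q hq hqd
      rcases (Nat.Prime.dvd_mul hq).mp hqd with h | h
      · exact Nat.le_of_dvd (by omega) h
      · exact (Nat.le_of_dvd (by omega) h).trans (by omega)
    have hXS := hconst (fun S => (Xᵀ * S) i j)
    have hSX := hconst (fun S => (S * X) i j)
    rw [hXS, hSX] at hco
    have := mul_left_cancel₀ hM_ne hco
    exact mul_left_cancel₀ hcard_ne this
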